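/- Any nonnegative integral solution x of a covering integer program {Ax ≥ 1, 0 ≤ x ≤ d} satisfies every knapsack-cover inequality: for each row i and each F ⊆ supp(a_i) with Σ_{j∈F} A_{ij} d_j < 1, we have Σ_{j∉F} min(A_{ij}, 1 − Σ_{j'∈F} A_{ij'} d_{j'}) x_j ≥ 1 − Σ_{j∈F} A_{ij} d_j. -/

import Mathlib

theorem stmt_12 (m n : ℕ) (A : Fin m → Fin n → ℝ) (hA : ∀ i j, 0 ≤ A i j)
    (d : Fin n → WithTop ℕ) (x : Fin n → ℕ)
    (hxd : ∀ j, (x j : WithTop ℕ) ≤ d j)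
    (hcov : ∀ i, 1 ≤ ∑ j, A i j * (x j : ℝ))
    (i : Fin m) (F : Finset (Fin n))
    (hFsupp : ∀ j ∈ F, 0 < A i j)
    (hFfin : ∀ j ∈ F, d j ≠ ⊤)
    (hFd : ∑ j ∈ F, A i j * ((WithTop.untopD 0 (d j) : ℕ) : ℝ) < 1) :
    1 - ∑ j ∈ F, A i j * ((WithTop.untopD 0 (d j) : ℕ) : ℝ)
      ≤ ∑ j ∈ Finset.univ \ F,
          min (A i j) (1 - ∑ j' ∈ F, A i j' * ((WithTop.untopD 0 (d j') : ℕ) : ℝ)) * (x j : ℝ) := by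
  set D : ℝ := ∑ j ∈ F, A i j * ((WithTop.untopD 0 (d j) : ℕ) : ℝ) with hD
  have hDpos : 0 < 1 - D := by linarith
  have hnn : ∀ j ∈ Finset.univ \ F, 0 ≤ min (A i j) (1 - D) * (x j : ℝ) := by
    intro j _
    exact mul_nonneg (le_min (hA i j) hDpos.le) (Nat.cast_nonneg _)
  by_cases hbig : ∃ j ∈ Finset.univ \ F, 1 ≤ x j ∧ 1 - D ≤ A i j
  · obtain ⟨j, hj, hx1, hAj⟩ := hbig
    have h1 : 1 - D ≤ min (A i j) (1 - D) * (x j : ℝ) := by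
      have : min (A i j) (1 - D) = 1 - D := min_eq_right hAj
      rw [this]
      nlinarith [(Nat.one_le_cast (α := ℝ)).mpr hx1]
    calc 1 - D ≤ min (A i j) (1 - D) * (x j : ℝ) := h1
      _ ≤ ∑ j ∈ Finset.univ \ F, min (A i j) (1 - D) * (x j : ℝ) :=
        Finset.single_le_sum hnn hj
  · push_neg at hbig
    have heq : ∀ j ∈ Finset.univ \ F, min (A i j) (1 - D) * (x j : ℝ) = A i j * (x j : ℝ) := by
      intro j hj
      rcases Nat.lt_or_ge (x j) 1 with h | h
      · have : x j = 0 := Nat.lt_one_iff.mp h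
        simp [this]
      · have := hbig j hj h
        rw [min_eq_left this.le]
    rw [Finset.sum_congr rfl heq]
    -- ∑_{j∉F} A ij x j ≥ 1 - ∑_{j∈F} A ij x j ≥ 1 - D
    have hsplit : ∑ j ∈ F, A i j * (x j : ℝ) + ∑ j ∈ Finset.univ \ F, A i j * (x j : ℝ)
        = ∑ j, A i j * (x j : ℝ) := by
      rw [add_comm, Finset.sum_sdiff (Finset.subset_univ F)]
    have hxF : ∀ j ∈ F, A i j * (x j : ℝ) ≤ A i j * ((WithTop.untopD 0 (d j) : ℕ) : ℝ) := by
      intro j hj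
      apply mul_le_mul_of_nonneg_left _ (hA i j)
      have hne := hFfin j hj
      obtain ⟨k, hk⟩ := Option.ne_none_iff_exists'.mp hne
      have : x j ≤ k := by
        have h2 := hxd j
        rw [hk] at h2
        exact WithTop.coe_le_coe.mp h2
      simp [hk, WithTop.untopD]
      exact_mod_cast this
    have hF : ∑ j ∈ F, A i j * (x j : ℝ) ≤ D := Finset.sum_le_sum hxF
    have := hcov i
    linarith
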